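/- Performance Difference Lemma for Markov Games (infinite horizon): for any two joint policies π, π' and any player i, V_i^{π'_i, π_{−i}}(ν₀) − V_i^{π_i, π_{−i}}(ν₀) = (1/(1−γ)) E_{(s,a) ∼ ρ_{(π'_i, π_{−i})}}[ Q_i^π(s,a) − V_i^π(s) ], where Q_i^π(s,a) = r_i(s,a) + γ ∑_{s'} P(s'|s,a) V_i^π(s'). -/

import Mathlib

open scoped BigOperators

namespace MAIL

/-- An `n`-player Markov Game with finite state space `S` and finite
per-player action spaces `A i` (joint actions are dependent functions). -/
structure Game (n : ℕ) (S : Type) (A : Fin n → Type) [Fintype S] [∀ i, Fintype (A i)] where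
  P : S → (∀ i, A i) → S → ℝ
  r : Fin n → S → (∀ i, A i) → ℝ
  ν₀ : S → ℝ
  γ : ℝ

variable {n : ℕ} {S : Type} {A : Fin n → Type} [Fintype S] [∀ i, Fintype (A i)]

/-- A (per-player or joint) policy is a probability distribution over actions at each state. -/
def IsPol {B : Type} [Fintype B] (π : S → B → ℝ) : Prop :=
  (∀ s b, 0 ≤ π s b) ∧ ∀ s, ∑ b, π s b = 1

/-- Standard validity assumptions on a game: `γ ∈ [0,1)`, `ν₀` a distribution,
`P` a transition kernel, rewards bounded in `[-1,1]`. -/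
def IsGame (G : Game n S A) : Prop :=
  0 ≤ G.γ ∧ G.γ < 1 ∧ (∀ s, 0 ≤ G.ν₀ s) ∧ (∑ s, G.ν₀ s = 1) ∧
    (∀ s a, (∀ s', 0 ≤ G.P s a s') ∧ ∑ s', G.P s a s' = 1) ∧
    (∀ i s a, |G.r i s a| ≤ 1)

/-- Joint (product) policy induced by independent per-player policies. -/
def joint (π : ∀ i, S → A i → ℝ) : S → (∀ i, A i) → ℝ :=
  fun s a => ∏ i, π i s (a i)

/-- `stateDist G π t s = P(s_t = s)` when rolling out joint policy `π`. -/
def stateDist (G : Game n S A) (π : S → (∀ i, A i) → ℝ) : ℕ → S → ℝ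
  | 0 => G.ν₀
  | t + 1 => fun s' => ∑ s : S, ∑ a : (∀ i, A i), stateDist G π t s * π s a * G.P s a s'

/-- Discounted state occupancy measure `μ_π(s) = (1-γ) ∑_t γ^t P(s_t = s)`. -/
noncomputable def occ (G : Game n S A) (π : S → (∀ i, A i) → ℝ) (s : S) : ℝ :=
  (1 - G.γ) * ∑' t : ℕ, G.γ ^ t * stateDist G π t s

/-- State-action occupancy measure `ρ_π(s,a) = μ_π(s) π(a|s)`. -/
noncomputable def saOcc (G : Game n S A) (π : S → (∀ i, A i) → ℝ)
    (s : S) (a : ∀ i, A i) : ℝ :=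
  occ G π s * π s a

/-- Player `i`'s value `V_i^π(ν₀) = (1/(1-γ)) E_{(s,a)∼ρ_π}[r_i(s,a)]`. -/
noncomputable def value (G : Game n S A) (i : Fin n) (π : S → (∀ i, A i) → ℝ) : ℝ :=
  (1 / (1 - G.γ)) * ∑ s : S, ∑ a : (∀ i, A i), saOcc G π s a * G.r i s a

/-- Player `i`'s value started from the Dirac distribution at state `s`. -/
noncomputable def valueFrom [DecidableEq S] (G : Game n S A) (i : Fin n)
    (π : S → (∀ i, A i) → ℝ) (s₀ : S) : ℝ :=
  value { G with ν₀ := fun s => if s = s₀ then 1 else 0 } i π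

/-- State-action value `Q_i^π(s,a) = r_i(s,a) + γ ∑_{s'} P(s'|s,a) V_i^π(s')`. -/
noncomputable def Qf [DecidableEq S] (G : Game n S A) (i : Fin n)
    (π : S → (∀ i, A i) → ℝ) (s : S) (a : ∀ i, A i) : ℝ :=
  G.r i s a + G.γ * ∑ s' : S, G.P s a s' * valueFrom G i π s'

/-- Unilateral deviation: player `i` switches to `πi'`, the others keep `π`. -/
def dev (π : ∀ i, S → A i → ℝ) (i : Fin n) (πi' : S → A i → ℝ) :
    ∀ j, S → A j → ℝ :=
  Function.update π i πi'

/-- Behavioral-cloning error of player `i`: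
`E_{s ∼ μ_{π^E}} ‖π_i(·|s) − π^E_i(·|s)‖₁`. -/
noncomputable def bcErr (G : Game n S A) (πE π : ∀ i, S → A i → ℝ) (i : Fin n) : ℝ :=
  ∑ s : S, occ G (joint πE) s * ∑ b : A i, |π i s b - πE i s b|

end MAIL

namespace MAIL


variable {n : ℕ} {S : Type} {A : Fin n → Type} [Fintype S] [∀ i, Fintype (A i)]

lemma joint_isPol (π : ∀ i, S → A i → ℝ) (hπ : ∀ i, IsPol (π i)) : IsPol (joint π) := by
  refine ⟨fun s a => Finset.prod_nonneg fun j _ => (hπ j).1 s (a j), fun s => ?_⟩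
  have h := (Fintype.prod_sum (fun (j : Fin n) (b : A j) => π j s b)).symm
  simpa [joint, (hπ _).2 s] using h

lemma dev_isPol (π : ∀ i, S → A i → ℝ) (hπ : ∀ i, IsPol (π i)) (i : Fin n)
    (πi' : S → A i → ℝ) (hπi' : IsPol πi') : ∀ j, IsPol (dev π i πi' j) := by
  intro j
  rcases eq_or_ne j i with rfl | hj
  · simpa [dev] using hπi'
  · simpa [dev, Function.update_of_ne hj] using hπ j

lemma stateDist_nonneg {G : Game n S A} (hG : IsGame G) {μ : S → (∀ i, A i) → ℝ}
    (hμ : IsPol μ) : ∀ t s, 0 ≤ stateDist G μ t s := by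
  intro t
  induction t with
  | zero => exact fun s => hG.2.2.1 s
  | succ t ih =>
    intro s'
    refine Finset.sum_nonneg fun s _ => Finset.sum_nonneg fun a _ => ?_
    exact mul_nonneg (mul_nonneg (ih s) (hμ.1 s a)) ((hG.2.2.2.2.1 s a).1 s')

lemma stateDist_sum {G : Game n S A} (hG : IsGame G) {μ : S → (∀ i, A i) → ℝ}
    (hμ : IsPol μ) : ∀ t, ∑ s, stateDist G μ t s = 1 := by
  intro t
  induction t with
  | zero => exact hG.2.2.2.1
  | succ t ih =>
    show ∑ s' : S, ∑ s : S, ∑ a : (∀ i, A i), stateDist G μ t s * μ s a * G.P s a s' = 1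
    rw [Finset.sum_comm]
    have : ∀ s : S, ∑ s' : S, ∑ a : (∀ i, A i), stateDist G μ t s * μ s a * G.P s a s'
        = stateDist G μ t s := by
      intro s
      rw [Finset.sum_comm]
      have : ∀ a : (∀ i, A i), ∑ s' : S, stateDist G μ t s * μ s a * G.P s a s'
          = stateDist G μ t s * μ s a := by
        intro a
        rw [← Finset.mul_sum, (hG.2.2.2.2.1 s a).2, mul_one]
      rw [Finset.sum_congr rfl fun a _ => this a, ← Finset.mul_sum, hμ.2 s, mul_one]
    rw [Finset.sum_congr rfl fun s _ => this s, ih]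

lemma stateDist_le_one {G : Game n S A} (hG : IsGame G) {μ : S → (∀ i, A i) → ℝ}
    (hμ : IsPol μ) (t : ℕ) (s : S) : stateDist G μ t s ≤ 1 := by
  calc stateDist G μ t s ≤ ∑ s', stateDist G μ t s' :=
        Finset.single_le_sum (fun s' _ => stateDist_nonneg hG hμ t s') (Finset.mem_univ s)
    _ = 1 := stateDist_sum hG hμ t

lemma summable_geom_bound {γ : ℝ} (h0 : 0 ≤ γ) (h1 : γ < 1) {c : ℕ → ℝ} {C : ℝ}
    (hc : ∀ t, |c t| ≤ C) : Summable fun t => γ ^ t * c t := by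
  refine Summable.of_norm_bounded
    ((summable_geometric_of_lt_one h0 h1).mul_right C) fun t => ?_
  rw [Real.norm_eq_abs, abs_mul, abs_pow, abs_of_nonneg h0]
  exact mul_le_mul_of_nonneg_left (hc t) (pow_nonneg h0 t)

/-- Core expansion: the normalized expectation under the state-action occupancy equals
the discounted sum over time. -/
lemma expand {G : Game n S A} (hG : IsGame G) {μ : S → (∀ i, A i) → ℝ}
    (hμ : IsPol μ) (g : S → (∀ i, A i) → ℝ) :
    (1 / (1 - G.γ)) * ∑ s : S, ∑ a : (∀ i, A i), saOcc G μ s a * g s a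
      = ∑' t : ℕ, G.γ ^ t * ∑ s : S, ∑ a : (∀ i, A i),
          stateDist G μ t s * μ s a * g s a := by
  have hγ : (1 : ℝ) - G.γ ≠ 0 := by
    have := hG.2.1; intro h; nlinarith
  have hsummand : ∀ (s : S) (a : ∀ i, A i),
      Summable fun t => G.γ ^ t * (stateDist G μ t s * (μ s a * g s a)) := by
    intro s a
    refine summable_geom_bound hG.1 hG.2.1 (C := |μ s a * g s a|) fun t => ?_
    rw [abs_mul]
    have h1 : |stateDist G μ t s| ≤ 1 := by
      rw [abs_of_nonneg (stateDist_nonneg hG hμ t s)]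
      exact stateDist_le_one hG hμ t s
    calc |stateDist G μ t s| * |μ s a * g s a| ≤ 1 * |μ s a * g s a| :=
          mul_le_mul_of_nonneg_right h1 (abs_nonneg _)
      _ = |μ s a * g s a| := one_mul _
  have hR : ∑' t : ℕ, G.γ ^ t * ∑ s : S, ∑ a : (∀ i, A i),
        stateDist G μ t s * μ s a * g s a
      = ∑ s : S, ∑ a : (∀ i, A i),
          ∑' t : ℕ, G.γ ^ t * (stateDist G μ t s * (μ s a * g s a)) := by
    have : ∀ t : ℕ, G.γ ^ t * ∑ s : S, ∑ a : (∀ i, A i),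
          stateDist G μ t s * μ s a * g s a
        = ∑ s : S, ∑ a : (∀ i, A i),
            G.γ ^ t * (stateDist G μ t s * (μ s a * g s a)) := by
      intro t
      rw [Finset.mul_sum]
      refine Finset.sum_congr rfl fun s _ => ?_
      rw [Finset.mul_sum]
      refine Finset.sum_congr rfl fun a _ => ?_
      ring
    rw [tsum_congr this, Summable.tsum_finsetSum (fun s _ => summable_sum fun a _ => hsummand s a)]
    refine Finset.sum_congr rfl fun s _ => ?_
    exact Summable.tsum_finsetSum fun a _ => hsummand s a
  rw [hR, Finset.mul_sum]
  refine Finset.sum_congr rfl fun s _ => ?_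
  rw [Finset.mul_sum]
  refine Finset.sum_congr rfl fun a _ => ?_
  rw [saOcc, occ]
  have : ∑' t : ℕ, G.γ ^ t * (stateDist G μ t s * (μ s a * g s a))
      = (∑' t : ℕ, G.γ ^ t * stateDist G μ t s) * (μ s a * g s a) := by
    rw [← tsum_mul_right]
    exact tsum_congr fun t => (mul_assoc _ _ _).symm
  rw [this]
  field_simp


/-- The game restarted from the Dirac distribution at `s₀`. -/
def Gd [DecidableEq S] (G : Game n S A) (s₀ : S) : Game n S A :=
  { G with ν₀ := fun s => if s = s₀ then 1 else 0 }

lemma valueFrom_eq [DecidableEq S] (G : Game n S A) (i : Fin n)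
    (μ : S → (∀ i, A i) → ℝ) (s₀ : S) : valueFrom G i μ s₀ = value (Gd G s₀) i μ := rfl

lemma Gd_isGame [DecidableEq S] {G : Game n S A} (hG : IsGame G) (s₀ : S) :
    IsGame (Gd G s₀) := by
  obtain ⟨h1, h2, h3, h4, h5, h6⟩ := hG
  refine ⟨h1, h2, fun s => ?_, ?_, h5, h6⟩
  · dsimp [Gd]; split <;> norm_num
  · simp [Gd]

lemma stateDist_dirac [DecidableEq S] (G : Game n S A) (μ : S → (∀ i, A i) → ℝ)
    (t : ℕ) (s : S) :
    stateDist G μ t s = ∑ s₀ : S, G.ν₀ s₀ * stateDist (Gd G s₀) μ t s := by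
  induction t generalizing s with
  | zero =>
    simp only [stateDist, Gd]
    simp [mul_ite, eq_comm]
  | succ t ih =>
    show (∑ s1 : S, ∑ a : (∀ i, A i), stateDist G μ t s1 * μ s1 a * G.P s1 a s)
        = ∑ s₀ : S, G.ν₀ s₀ * ∑ s1 : S, ∑ a : (∀ i, A i),
            stateDist (Gd G s₀) μ t s1 * μ s1 a * G.P s1 a s
    calc (∑ s1 : S, ∑ a : (∀ i, A i), stateDist G μ t s1 * μ s1 a * G.P s1 a s)
        = ∑ s1 : S, ∑ s₀ : S, ∑ a : (∀ i, A i),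
            G.ν₀ s₀ * (stateDist (Gd G s₀) μ t s1 * μ s1 a * G.P s1 a s) := by
          refine Finset.sum_congr rfl fun s1 _ => ?_
          rw [Finset.sum_comm]
          refine Finset.sum_congr rfl fun a _ => ?_
          rw [ih s1, Finset.sum_mul, Finset.sum_mul]
          exact Finset.sum_congr rfl fun s₀ _ => by ring
      _ = ∑ s₀ : S, G.ν₀ s₀ * ∑ s1 : S, ∑ a : (∀ i, A i),
            stateDist (Gd G s₀) μ t s1 * μ s1 a * G.P s1 a s := by
          rw [Finset.sum_comm]
          refine Finset.sum_congr rfl fun s₀ _ => ?_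
          rw [Finset.mul_sum]
          exact Finset.sum_congr rfl fun s1 _ => (Finset.mul_sum _ _ _).symm

lemma occ_dirac [DecidableEq S] {G : Game n S A} (hG : IsGame G)
    {μ : S → (∀ i, A i) → ℝ} (hμ : IsPol μ) (s : S) :
    occ G μ s = ∑ s₀ : S, G.ν₀ s₀ * occ (Gd G s₀) μ s := by
  have hsummand : ∀ s₀ : S, Summable fun t : ℕ =>
      G.ν₀ s₀ * (G.γ ^ t * stateDist (Gd G s₀) μ t s) := by
    intro s₀
    refine Summable.mul_left _ ?_
    refine summable_geom_bound hG.1 hG.2.1 (C := 1) fun t => ?_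
    rw [abs_of_nonneg (stateDist_nonneg (Gd_isGame hG s₀) hμ t s)]
    exact stateDist_le_one (Gd_isGame hG s₀) hμ t s
  show (1 - G.γ) * ∑' t : ℕ, G.γ ^ t * stateDist G μ t s
      = ∑ s₀ : S, G.ν₀ s₀ * ((1 - (Gd G s₀).γ) * ∑' t : ℕ,
          (Gd G s₀).γ ^ t * stateDist (Gd G s₀) μ t s)
  have hγ : ∀ s₀ : S, (Gd G s₀).γ = G.γ := fun _ => rfl
  have key : ∑' t : ℕ, G.γ ^ t * stateDist G μ t s
      = ∑ s₀ : S, G.ν₀ s₀ * ∑' t : ℕ, G.γ ^ t * stateDist (Gd G s₀) μ t s := by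
    have h1 : ∀ t : ℕ, G.γ ^ t * stateDist G μ t s
        = ∑ s₀ : S, G.ν₀ s₀ * (G.γ ^ t * stateDist (Gd G s₀) μ t s) := by
      intro t
      rw [stateDist_dirac G μ t s, Finset.mul_sum]
      exact Finset.sum_congr rfl fun s₀ _ => by ring
    rw [tsum_congr h1, Summable.tsum_finsetSum fun s₀ _ => hsummand s₀]
    exact Finset.sum_congr rfl fun s₀ _ => tsum_mul_left
  rw [key, Finset.mul_sum]
  exact Finset.sum_congr rfl fun s₀ _ => by rw [hγ]; ring

lemma sum_swap3 {X Y Z : Type*} [Fintype X] [Fintype Y] [Fintype Z] (f : X → Y → Z → ℝ) :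
    ∑ x : X, ∑ y : Y, ∑ z : Z, f x y z = ∑ z : Z, ∑ x : X, ∑ y : Y, f x y z :=
  calc ∑ x : X, ∑ y : Y, ∑ z : Z, f x y z
      = ∑ x : X, ∑ z : Z, ∑ y : Y, f x y z :=
        Finset.sum_congr rfl fun x _ => Finset.sum_comm
    _ = ∑ z : Z, ∑ x : X, ∑ y : Y, f x y z := Finset.sum_comm

lemma value_dirac [DecidableEq S] {G : Game n S A} (hG : IsGame G)
    {μ : S → (∀ i, A i) → ℝ} (hμ : IsPol μ) (i : Fin n) :
    value G i μ = ∑ s₀ : S, G.ν₀ s₀ * valueFrom G i μ s₀ := by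
  have h : ∀ s₀ : S, valueFrom G i μ s₀
      = (1 / (1 - G.γ)) * ∑ s : S, ∑ a : (∀ i, A i),
          occ (Gd G s₀) μ s * μ s a * G.r i s a := fun _ => rfl
  calc value G i μ
      = (1 / (1 - G.γ)) * ∑ s : S, ∑ a : (∀ i, A i), occ G μ s * μ s a * G.r i s a := rfl
    _ = (1 / (1 - G.γ)) * ∑ s : S, ∑ a : (∀ i, A i), ∑ s₀ : S,
          G.ν₀ s₀ * (occ (Gd G s₀) μ s * μ s a * G.r i s a) := by
        refine congrArg _ (Finset.sum_congr rfl fun s _ => Finset.sum_congr rfl fun a _ => ?_)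
        rw [occ_dirac hG hμ s, Finset.sum_mul, Finset.sum_mul]
        exact Finset.sum_congr rfl fun s₀ _ => by ring
    _ = (1 / (1 - G.γ)) * ∑ s₀ : S, ∑ s : S, ∑ a : (∀ i, A i),
          G.ν₀ s₀ * (occ (Gd G s₀) μ s * μ s a * G.r i s a) := by
        rw [sum_swap3]
    _ = ∑ s₀ : S, G.ν₀ s₀ * valueFrom G i μ s₀ := by
        rw [Finset.mul_sum]
        refine Finset.sum_congr rfl fun s₀ _ => ?_
        rw [h s₀]
        rw [Finset.sum_congr rfl fun s _ => (Finset.mul_sum Finset.univ _ (G.ν₀ s₀)).symm]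
        rw [← Finset.mul_sum]
        ring

lemma step_identity {G : Game n S A} {μt : S → (∀ i, A i) → ℝ} (hμt : IsPol μt)
    (V : S → ℝ) (R : S → (∀ i, A i) → ℝ) (t : ℕ) :
    (∑ s : S, ∑ a : (∀ i, A i), stateDist G μt t s * μt s a *
        ((R s a + G.γ * ∑ s' : S, G.P s a s' * V s') - V s))
      = (∑ s : S, ∑ a : (∀ i, A i), stateDist G μt t s * μt s a * R s a)
        + G.γ * (∑ s' : S, stateDist G μt (t + 1) s' * V s')
        - ∑ s : S, stateDist G μt t s * V s := by
  have hT2 : (∑ s : S, ∑ a : (∀ i, A i), stateDist G μt t s * μt s a *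
        (G.γ * ∑ s' : S, G.P s a s' * V s'))
      = G.γ * ∑ s' : S, stateDist G μt (t + 1) s' * V s' := by
    have e1 : ∀ (s : S) (a : ∀ i, A i), stateDist G μt t s * μt s a *
          (G.γ * ∑ s' : S, G.P s a s' * V s')
        = ∑ s' : S, G.γ * (stateDist G μt t s * μt s a * G.P s a s' * V s') := by
      intro s a
      rw [Finset.mul_sum Finset.univ (fun s' => G.P s a s' * V s') G.γ,
        Finset.mul_sum Finset.univ _ (stateDist G μt t s * μt s a)]
      exact Finset.sum_congr rfl fun s' _ => by ring
    rw [Finset.sum_congr rfl fun s _ => Finset.sum_congr rfl fun a _ => e1 s a]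
    rw [sum_swap3]
    rw [Finset.mul_sum]
    refine Finset.sum_congr rfl fun s' _ => ?_
    show _ = G.γ * ((∑ s : S, ∑ a : (∀ i, A i),
        stateDist G μt t s * μt s a * G.P s a s') * V s')
    rw [Finset.sum_mul, Finset.mul_sum]
    refine Finset.sum_congr rfl fun s _ => ?_
    rw [Finset.sum_mul, Finset.mul_sum]
  have hT3 : (∑ s : S, ∑ a : (∀ i, A i), stateDist G μt t s * μt s a * V s)
      = ∑ s : S, stateDist G μt t s * V s := by
    refine Finset.sum_congr rfl fun s _ => ?_
    have h : ∀ a : (∀ i, A i), stateDist G μt t s * μt s a * V s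
        = (stateDist G μt t s * V s) * μt s a := fun a => by ring
    rw [Finset.sum_congr rfl fun a _ => h a, ← Finset.mul_sum, hμt.2 s, mul_one]
  have hexp : (∑ s : S, ∑ a : (∀ i, A i), stateDist G μt t s * μt s a *
        ((R s a + G.γ * ∑ s' : S, G.P s a s' * V s') - V s))
      = (∑ s : S, ∑ a : (∀ i, A i), stateDist G μt t s * μt s a * R s a)
        + (∑ s : S, ∑ a : (∀ i, A i), stateDist G μt t s * μt s a *
            (G.γ * ∑ s' : S, G.P s a s' * V s'))
        - ∑ s : S, ∑ a : (∀ i, A i), stateDist G μt t s * μt s a * V s := by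
    simp only [mul_sub, mul_add, Finset.sum_add_distrib, Finset.sum_sub_distrib]
  rw [hexp, hT2, hT3]


set_option maxHeartbeats 1000000 in
/-- Performance Difference Lemma for infinite-horizon Markov Games:
`V_i^{π'_i,π_{-i}}(ν₀) − V_i^{π}(ν₀)
  = (1/(1-γ)) E_{(s,a) ∼ ρ_{(π'_i,π_{-i})}} [Q_i^π(s,a) − V_i^π(s)]`. -/
theorem performance_difference {n : ℕ} {S : Type} {A : Fin n → Type}
    [Fintype S] [∀ i, Fintype (A i)] [DecidableEq S]
    (G : Game n S A) (hG : IsGame G)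
    (π : ∀ i, S → A i → ℝ) (hπ : ∀ i, IsPol (π i))
    (i : Fin n) (πi' : S → A i → ℝ) (hπi' : IsPol πi') :
    value G i (joint (dev π i πi')) - value G i (joint π) =
      (1 / (1 - G.γ)) * ∑ s : S, ∑ a : (∀ j, A j),
        saOcc G (joint (dev π i πi')) s a *
          (Qf G i (joint π) s a - valueFrom G i (joint π) s) := by
  have hγ0 := hG.1
  have hγ1 := hG.2.1
  set μt := joint (dev π i πi') with hμtdef
  have hμt : IsPol μt := joint_isPol _ (dev_isPol π hπ i πi' hπi')
  have hμ : IsPol (joint π) := joint_isPol π hπ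
  have hfbound : ∀ t : ℕ,
      |∑ s : S, stateDist G μt t s * valueFrom G i (joint π) s|
        ≤ ∑ s : S, |valueFrom G i (joint π) s| := by
    intro t
    calc |∑ s : S, stateDist G μt t s * valueFrom G i (joint π) s|
        ≤ ∑ s : S, |stateDist G μt t s * valueFrom G i (joint π) s| :=
          Finset.abs_sum_le_sum_abs _ _
      _ ≤ ∑ s : S, |valueFrom G i (joint π) s| := by
          refine Finset.sum_le_sum fun s _ => ?_
          rw [abs_mul, abs_of_nonneg (stateDist_nonneg hG hμt t s)]
          calc stateDist G μt t s * |valueFrom G i (joint π) s|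
              ≤ 1 * |valueFrom G i (joint π) s| :=
                mul_le_mul_of_nonneg_right (stateDist_le_one hG hμt t s) (abs_nonneg _)
            _ = |valueFrom G i (joint π) s| := one_mul _
  have hAbound : ∀ t : ℕ,
      |∑ s : S, ∑ a : (∀ j, A j), stateDist G μt t s * μt s a * G.r i s a|
        ≤ (Fintype.card S : ℝ) := by
    intro t
    calc |∑ s : S, ∑ a : (∀ j, A j), stateDist G μt t s * μt s a * G.r i s a|
        ≤ ∑ s : S, |∑ a : (∀ j, A j), stateDist G μt t s * μt s a * G.r i s a| :=
          Finset.abs_sum_le_sum_abs _ _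
      _ ≤ ∑ s : S, ∑ a : (∀ j, A j), |stateDist G μt t s * μt s a * G.r i s a| :=
          Finset.sum_le_sum fun s _ => Finset.abs_sum_le_sum_abs _ _
      _ ≤ ∑ s : S, ∑ a : (∀ j, A j), μt s a := by
          refine Finset.sum_le_sum fun s _ => Finset.sum_le_sum fun a _ => ?_
          rw [abs_mul, abs_mul, abs_of_nonneg (stateDist_nonneg hG hμt t s),
            abs_of_nonneg (hμt.1 s a)]
          calc stateDist G μt t s * μt s a * |G.r i s a|
              ≤ 1 * μt s a * 1 := by
                refine mul_le_mul ?_ (hG.2.2.2.2.2 i s a) (abs_nonneg _) ?_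
                · exact mul_le_mul_of_nonneg_right (stateDist_le_one hG hμt t s) (hμt.1 s a)
                · exact mul_nonneg zero_le_one (hμt.1 s a)
            _ = μt s a := by ring
      _ = (Fintype.card S : ℝ) := by simp [hμt.2]
  have hsumA : Summable fun t : ℕ => G.γ ^ t *
      ∑ s : S, ∑ a : (∀ j, A j), stateDist G μt t s * μt s a * G.r i s a :=
    summable_geom_bound hγ0 hγ1 hAbound
  have hsumf : Summable fun t : ℕ => G.γ ^ t *
      ∑ s : S, stateDist G μt t s * valueFrom G i (joint π) s :=
    summable_geom_bound hγ0 hγ1 hfbound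
  have hsumfs : Summable fun t : ℕ => G.γ ^ (t + 1) *
      ∑ s : S, stateDist G μt (t + 1) s * valueFrom G i (joint π) s :=
    (summable_nat_add_iff 1).2 hsumf
  have hsumdiff : Summable fun t : ℕ =>
      (G.γ ^ (t + 1) * ∑ s : S, stateDist G μt (t + 1) s * valueFrom G i (joint π) s)
      - G.γ ^ t * ∑ s : S, stateDist G μt t s * valueFrom G i (joint π) s :=
    hsumfs.sub hsumf
  have htends : Filter.Tendsto (fun t : ℕ => G.γ ^ t *
      ∑ s : S, stateDist G μt t s * valueFrom G i (joint π) s)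
      Filter.atTop (nhds 0) := by
    refine squeeze_zero_norm (a := fun t : ℕ =>
      G.γ ^ t * ∑ s : S, |valueFrom G i (joint π) s|) (fun t => ?_) ?_
    · rw [Real.norm_eq_abs, abs_mul, abs_pow, abs_of_nonneg hγ0]
      exact mul_le_mul_of_nonneg_left (hfbound t) (pow_nonneg hγ0 t)
    · have h := tendsto_pow_atTop_nhds_zero_of_lt_one hγ0 hγ1
      simpa using h.mul_const (∑ s : S, |valueFrom G i (joint π) s|)
  have htele : ∑' t : ℕ,
      ((G.γ ^ (t + 1) * ∑ s : S, stateDist G μt (t + 1) s * valueFrom G i (joint π) s)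
        - G.γ ^ t * ∑ s : S, stateDist G μt t s * valueFrom G i (joint π) s)
      = -(G.γ ^ 0 * ∑ s : S, stateDist G μt 0 s * valueFrom G i (joint π) s) := by
    set g : ℕ → ℝ := fun t =>
      G.γ ^ t * ∑ s : S, stateDist G μt t s * valueFrom G i (joint π) s with hg
    have h1 : Filter.Tendsto (fun N => ∑ t ∈ Finset.range N, (g (t + 1) - g t))
        Filter.atTop (nhds (0 - g 0)) := by
      have heq : (fun N => ∑ t ∈ Finset.range N, (g (t + 1) - g t))
          = fun N => g N - g 0 := by
        funext N; exact Finset.sum_range_sub g N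
      rw [heq]
      exact htends.sub tendsto_const_nhds
    have h2 := hsumdiff.hasSum.tendsto_sum_nat
    have h3 := tendsto_nhds_unique h2 h1
    rw [h3]; ring
  have hexpandQ := expand hG hμt
    (fun s a => Qf G i (joint π) s a - valueFrom G i (joint π) s)
  have hkey : ∀ t : ℕ, (∑ s : S, ∑ a : (∀ j, A j), stateDist G μt t s * μt s a *
        (Qf G i (joint π) s a - valueFrom G i (joint π) s))
      = (∑ s : S, ∑ a : (∀ j, A j), stateDist G μt t s * μt s a * G.r i s a)
        + G.γ * (∑ s' : S, stateDist G μt (t + 1) s' * valueFrom G i (joint π) s')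
        - ∑ s : S, stateDist G μt t s * valueFrom G i (joint π) s := by
    intro t
    exact step_identity (G := G) hμt (fun s => valueFrom G i (joint π) s) (G.r i) t
  have hval : value G i μt = ∑' t : ℕ, G.γ ^ t *
      ∑ s : S, ∑ a : (∀ j, A j), stateDist G μt t s * μt s a * G.r i s a :=
    expand hG hμt (G.r i)
  have hval0 : value G i (joint π)
      = G.γ ^ 0 * ∑ s : S, stateDist G μt 0 s * valueFrom G i (joint π) s := by
    rw [value_dirac hG hμ i]
    simp [stateDist]
  rw [hexpandQ]
  have hrw : ∀ t : ℕ, G.γ ^ t * (∑ s : S, ∑ a : (∀ j, A j),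
        stateDist G μt t s * μt s a *
          (Qf G i (joint π) s a - valueFrom G i (joint π) s))
      = (G.γ ^ t * ∑ s : S, ∑ a : (∀ j, A j),
            stateDist G μt t s * μt s a * G.r i s a)
        + ((G.γ ^ (t + 1) * ∑ s : S, stateDist G μt (t + 1) s * valueFrom G i (joint π) s)
          - G.γ ^ t * ∑ s : S, stateDist G μt t s * valueFrom G i (joint π) s) := by
    intro t
    rw [hkey t]
    ring
  rw [tsum_congr hrw, Summable.tsum_add hsumA hsumdiff, htele, hval, hval0]
  ring


end MAIL
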